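/- Let k ≥ 1 be an integer. The equation d_2(λ) = x_1(λ)^k has exactly one root ρ″_k in the interval (√(2+√5), ∞), and ρ(T″_{(i,k,j)}) → ρ″_k as min(i,j) → ∞; that is, for every ε > 0 there exists M such that for all integers i, j ≥ M, |ρ(T″_{(i,k,j)}) − ρ″_k| < ε. -/

import Mathlib

open Finset
open scoped Classical

/-- Adjacency matrix of a simple graph over `ℝ`. -/
noncomputable def adjM {V : Type*} [Fintype V] (G : SimpleGraph V) : Matrix V V ℝ :=
  fun a b => if G.Adj a b then 1 else 0

/-- Spectral radius: the largest eigenvalue of the adjacency matrix. -/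
noncomputable def specRad {V : Type*} [Fintype V] (G : SimpleGraph V) : ℝ :=
  sSup {t : ℝ | ∃ f : V → ℝ, f ≠ 0 ∧ (adjM G).mulVec f = t • f}

/-- Characteristic polynomial of the adjacency matrix, as a function `φ_G(λ) = det(λI − A)`. -/
noncomputable def phi {V : Type*} [Fintype V] [DecidableEq V] (G : SimpleGraph V) (l : ℝ) : ℝ :=
  (l • (1 : Matrix V V ℝ) - adjM G).det

/-- `G` is connected with diameter exactly `D`. -/
def hasDiam {V : Type*} (G : SimpleGraph V) (D : ℕ) : Prop :=
  G.Connected ∧ (∀ u v : V, G.dist u v ≤ D) ∧ ∃ u v : V, G.dist u v = D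

/-- `G` is a minimizer graph among connected graphs on `n` vertices with diameter `D`. -/
def IsMinimizer (n D : ℕ) (G : SimpleGraph (Fin n)) : Prop :=
  hasDiam G D ∧ ∀ H : SimpleGraph (Fin n), hasDiam H D → specRad G ≤ specRad H

noncomputable def x1 (l : ℝ) : ℝ := (l - Real.sqrt (l ^ 2 - 4)) / 2
noncomputable def x2 (l : ℝ) : ℝ := (l + Real.sqrt (l ^ 2 - 4)) / 2
noncomputable def d1f (l : ℝ) : ℝ := l - x1 l ^ 3
noncomputable def d2f (l : ℝ) : ℝ := x2 l ^ 3 - l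

/-- Deletion of a vertex from a graph. -/
def delVert {V : Type*} (G : SimpleGraph V) (v : V) : SimpleGraph {u : V // u ≠ v} :=
  SimpleGraph.comap Subtype.val G

noncomputable def pfun {V : Type*} [Fintype V] [DecidableEq V] (G : SimpleGraph V) (v : V)
    (l : ℝ) : ℝ :=
  (phi (delVert G v) l - x1 l * phi G l) / (x2 l - x1 l)

noncomputable def qfun {V : Type*} [Fintype V] [DecidableEq V] (G : SimpleGraph V) (v : V)
    (l : ℝ) : ℝ :=
  (x2 l * phi G l - phi (delVert G v) l) / (x2 l - x1 l)

/-- The tree `T″_{(i,k,j)}`: a path `u_0 ∼ ⋯ ∼ u_{i+k+j+5}` with one pendant vertex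
attached at each of `u_1`, `u_{i+2}`, `u_{i+k+3}`, `u_{i+k+j+4}`. -/
def treeT2 (i k j : ℕ) : SimpleGraph (Fin (i + k + j + 6) ⊕ Fin 4) :=
  SimpleGraph.fromRel (fun a b =>
    match a, b with
    | Sum.inl a, Sum.inl b => (a : ℕ) + 1 = (b : ℕ)
    | Sum.inl a, Sum.inr t =>
        ((t : ℕ) = 0 ∧ (a : ℕ) = 1) ∨ ((t : ℕ) = 1 ∧ (a : ℕ) = i + 2) ∨
        ((t : ℕ) = 2 ∧ (a : ℕ) = i + k + 3) ∨ ((t : ℕ) = 3 ∧ (a : ℕ) = i + k + j + 4)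
    | _, _ => False)

section Spectral

variable {V : Type*} [Fintype V] [DecidableEq V] (G : SimpleGraph V)

lemma adjM_symm (a b : V) : adjM G a b = adjM G b a := by
  simp [adjM, SimpleGraph.adj_comm]

lemma adjM_nonneg (a b : V) : 0 ≤ adjM G a b := by
  unfold adjM; split <;> norm_num

lemma adjM_isHermitian : (adjM G).IsHermitian := by
  ext a b
  simp [Matrix.conjTranspose_apply, adjM_symm G a b]

lemma dot_mulVec_symm (f g : V → ℝ) :
    ∑ v, (adjM G).mulVec f v * g v = ∑ v, f v * (adjM G).mulVec g v := by
  simp only [Matrix.mulVec, dotProduct, Finset.sum_mul, Finset.mul_sum]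
  rw [Finset.sum_comm]
  apply Finset.sum_congr rfl; intro u _
  apply Finset.sum_congr rfl; intro v _
  rw [adjM_symm G v u]; ring

/-- Upper bound via positive supersolution. -/
lemma eig_le_of_supersol {l : ℝ} {g : V → ℝ} (hg : ∀ v, 0 < g v)
    (hsup : ∀ v, (adjM G).mulVec g v ≤ l * g v)
    {t : ℝ} (ht : t ∈ {t : ℝ | ∃ f : V → ℝ, f ≠ 0 ∧ (adjM G).mulVec f = t • f}) :
    t ≤ l := by
  obtain ⟨f, hf0, hf⟩ := ht
  set F : V → ℝ := fun v => |f v| with hF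
  have key : ∀ v, |t| * F v ≤ (adjM G).mulVec F v := by
    intro v
    have h1 : |t| * F v = |(adjM G).mulVec f v| := by
      rw [hf]; simp [abs_mul, hF]
    rw [h1]
    calc |(adjM G).mulVec f v| ≤ ∑ u, |adjM G v u * f u| :=
          Finset.abs_sum_le_sum_abs _ _
      _ = ∑ u, adjM G v u * F u := by
          apply Finset.sum_congr rfl; intro u _
          rw [abs_mul, abs_of_nonneg (adjM_nonneg G v u)]
      _ = (adjM G).mulVec F v := rfl
  have hFg_pos : 0 < ∑ v, F v * g v := by
    obtain ⟨v0, hv0⟩ : ∃ v, f v ≠ 0 := by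
      by_contra h; push_neg at h; exact hf0 (funext h)
    apply Finset.sum_pos' (fun v _ => mul_nonneg (abs_nonneg _) (hg v).le)
    exact ⟨v0, Finset.mem_univ _, mul_pos (abs_pos.2 hv0) (hg v0)⟩
  have chain : |t| * ∑ v, F v * g v ≤ l * ∑ v, F v * g v := by
    calc |t| * ∑ v, F v * g v = ∑ v, (|t| * F v) * g v := by
          rw [Finset.mul_sum]; apply Finset.sum_congr rfl; intros; ring
      _ ≤ ∑ v, (adjM G).mulVec F v * g v := by
          apply Finset.sum_le_sum; intro v _
          exact mul_le_mul_of_nonneg_right (key v) (hg v).le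
      _ = ∑ v, F v * (adjM G).mulVec g v := dot_mulVec_symm G F g
      _ ≤ ∑ v, F v * (l * g v) := by
          apply Finset.sum_le_sum; intro v _
          exact mul_le_mul_of_nonneg_left (hsup v) (abs_nonneg _)
      _ = l * ∑ v, F v * g v := by
          rw [Finset.mul_sum]; apply Finset.sum_congr rfl; intros; ring
  have := le_of_mul_le_mul_right (by linarith [chain] : |t| * (∑ v, F v * g v) ≤ l * (∑ v, F v * g v)) hFg_pos
  exact le_trans (le_abs_self t) this

end Spectral

section Lower

open Matrix

variable {V : Type*} [Fintype V] [DecidableEq V] [Nonempty V] (G : SimpleGraph V)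

/-- Lower bound: a nonnegative subsolution pushes up some eigenvalue. -/
lemma exists_eig_ge_of_subsol {l : ℝ} {g : V → ℝ} (hg : ∀ v, 0 ≤ g v) (hg0 : g ≠ 0)
    (hsub : ∀ v, l * g v ≤ (adjM G).mulVec g v) :
    ∃ t ∈ {t : ℝ | ∃ f : V → ℝ, f ≠ 0 ∧ (adjM G).mulVec f = t • f}, l ≤ t := by
  classical
  have hA := adjM_isHermitian G
  set A := adjM G with hAdef
  set μ : V → ℝ := hA.eigenvalues with hμ
  obtain ⟨i0, -, hi0⟩ := Finset.exists_max_image (Finset.univ : Finset V) μ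
    ⟨Classical.arbitrary V, Finset.mem_univ _⟩
  refine ⟨μ i0, ⟨⇑(hA.eigenvectorBasis i0), ?_, ?_⟩, ?_⟩
  · intro h
    apply hA.eigenvectorBasis.orthonormal.ne_zero i0
    ext v; exact congrFun h v
  · exact hA.mulVec_eigenvectorBasis i0
  · -- Rayleigh quotient argument
    set U : Matrix V V ℝ := (hA.eigenvectorUnitary : Matrix V V ℝ) with hU
    set c : V → ℝ := Uᵀ *ᵥ g with hc
    have hstar : star U = Uᵀ := by
      ext a b; simp [Matrix.star_apply]
    have hUU : U * Uᵀ = 1 := by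
      rw [← hstar]; exact Matrix.mem_unitaryGroup_iff.mp hA.eigenvectorUnitary.2
    have hUtU : Uᵀ * U = 1 := by
      rw [← hstar]; exact Matrix.mem_unitaryGroup_iff'.mp hA.eigenvectorUnitary.2
    have hmv : A *ᵥ g = U *ᵥ (Matrix.diagonal μ *ᵥ c) := by
      have hofr : (RCLike.ofReal ∘ μ : V → ℝ) = μ := by
        funext i; simp
      calc A *ᵥ g = (U * Matrix.diagonal (RCLike.ofReal ∘ μ) * star U) *ᵥ g := by
            exact congrArg (· *ᵥ g) hA.spectral_theorem
        _ = U *ᵥ (Matrix.diagonal μ *ᵥ (Uᵀ *ᵥ g)) := by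
            rw [hstar, hofr, Matrix.mul_assoc, ← Matrix.mulVec_mulVec, ← Matrix.mulVec_mulVec]
    have gAg : g ⬝ᵥ (A *ᵥ g) = ∑ v, μ v * (c v) ^ 2 := by
      rw [hmv, Matrix.dotProduct_mulVec g U, ← Matrix.mulVec_transpose, ← hc]
      simp only [dotProduct, Matrix.mulVec_diagonal]
      apply Finset.sum_congr rfl; intros; ring
    have gg : g ⬝ᵥ g = ∑ v, (c v) ^ 2 := by
      have h1 : c ⬝ᵥ c = g ⬝ᵥ g := by
        calc c ⬝ᵥ c = c ⬝ᵥ (Uᵀ *ᵥ g) := by rw [← hc]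
          _ = (c ᵥ* Uᵀ) ⬝ᵥ g := Matrix.dotProduct_mulVec c Uᵀ g
          _ = (U *ᵥ c) ⬝ᵥ g := by rw [Matrix.vecMul_transpose]
          _ = ((U * Uᵀ) *ᵥ g) ⬝ᵥ g := by rw [hc, Matrix.mulVec_mulVec]
          _ = g ⬝ᵥ g := by rw [hUU, Matrix.one_mulVec]
      rw [← h1]
      simp only [dotProduct]
      apply Finset.sum_congr rfl; intros; ring
    have hggpos : 0 < g ⬝ᵥ g := by
      obtain ⟨v0, hv0⟩ : ∃ v, g v ≠ 0 := by
        by_contra h; push_neg at h; exact hg0 (funext h)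
      have hv0' : 0 < g v0 := (hg v0).lt_of_ne (Ne.symm hv0)
      simp only [dotProduct]
      apply Finset.sum_pos' (fun v _ => mul_self_nonneg _)
      exact ⟨v0, Finset.mem_univ _, mul_pos hv0' hv0'⟩
    have h4 : l * (g ⬝ᵥ g) ≤ g ⬝ᵥ (A *ᵥ g) := by
      simp only [dotProduct]
      rw [Finset.mul_sum]
      apply Finset.sum_le_sum; intro v _
      calc l * (g v * g v) = (l * g v) * g v := by ring
        _ ≤ A.mulVec g v * g v := mul_le_mul_of_nonneg_right (hsub v) (hg v)
        _ = g v * A.mulVec g v := mul_comm _ _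
    have h3 : g ⬝ᵥ (A *ᵥ g) ≤ μ i0 * (g ⬝ᵥ g) := by
      rw [gAg, gg, Finset.mul_sum]
      apply Finset.sum_le_sum; intro v _
      exact mul_le_mul_of_nonneg_right (hi0 v (Finset.mem_univ v)) (sq_nonneg _)
    nlinarith [h4, h3, hggpos]

end Lower

section XY

variable {l : ℝ}

lemma sqrt_sq' (hl : 2 < l) : (Real.sqrt (l ^ 2 - 4)) ^ 2 = l ^ 2 - 4 :=
  Real.sq_sqrt (by nlinarith)

lemma sqrt_lt_self (hl : 2 < l) : Real.sqrt (l ^ 2 - 4) < l := by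
  have h := sqrt_sq' hl
  nlinarith [Real.sqrt_nonneg (l ^ 2 - 4)]

lemma x1_pos (hl : 2 < l) : 0 < x1 l := by
  have := sqrt_lt_self hl
  unfold x1; linarith

lemma x2_gt_one (hl : 2 < l) : 1 < x2 l := by
  have := Real.sqrt_nonneg (l ^ 2 - 4)
  unfold x2; linarith

lemma x1_add_x2 (l : ℝ) : x1 l + x2 l = l := by unfold x1 x2; ring

lemma x1_mul_x2 (hl : 2 < l) : x1 l * x2 l = 1 := by
  have h := sqrt_sq' hl
  unfold x1 x2; nlinarith

lemma x1_lt_one (hl : 2 < l) : x1 l < 1 := by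
  have h1 := x1_mul_x2 hl
  have h2 := x2_gt_one hl
  have h3 := x1_pos hl
  nlinarith

lemma x1_eq_inv (hl : 2 < l) : x1 l = 1 / x2 l := by
  have h1 := x1_mul_x2 hl
  have h2 := x2_gt_one hl
  field_simp at h1 ⊢; linarith

lemma x2_strictMono : StrictMonoOn x2 (Set.Ioi 2) := by
  intro a ha b hb hab
  simp only [Set.mem_Ioi] at ha hb
  unfold x2
  have h1 : Real.sqrt (a ^ 2 - 4) ≤ Real.sqrt (b ^ 2 - 4) :=
    Real.sqrt_le_sqrt (by nlinarith)
  linarith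

lemma x2_continuous : Continuous x2 := by
  unfold x2; continuity

lemma x1_continuous : Continuous x1 := by
  unfold x1; continuity

end XY

section Root

variable (k : ℕ)

noncomputable def Ffun (k : ℕ) : ℝ → ℝ := fun l => d2f l - x1 l ^ k

lemma Ffun_continuous : Continuous (Ffun k) := by
  unfold Ffun d2f
  exact ((x2_continuous.pow 3).sub continuous_id).sub (x1_continuous.pow k)

lemma Ffun_eq (hl : 2 < l) :
    Ffun k l = x2 l ^ 3 - x2 l - 1 / x2 l - (1 / x2 l) ^ k := by
  have h1 := x1_add_x2 l
  have h2 := x1_eq_inv hl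
  unfold Ffun d2f
  rw [h2]; rw [h2] at h1; linarith [h1]

lemma Hmono (hk : 1 ≤ k) {s t : ℝ} (hs : 1 < s) (hst : s < t) :
    s ^ 3 - s - 1 / s - (1 / s) ^ k < t ^ 3 - t - 1 / t - (1 / t) ^ k := by
  have ht0 : (0:ℝ) < t := by linarith
  have h1 : s ^ 3 - s < t ^ 3 - t := by
    nlinarith [mul_pos (sub_pos.2 hst) (show (0:ℝ) < t ^ 2 + t * s + s ^ 2 - 1 by nlinarith)]
  have h2 : 1 / t < 1 / s := by
    apply one_div_lt_one_div_of_lt <;> linarith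
  have h3 : (1 / t) ^ k < (1 / s) ^ k := by
    apply pow_lt_pow_left₀ h2 (by positivity)
    omega
  linarith

lemma Ffun_strictMono (hk : 1 ≤ k) : StrictMonoOn (Ffun k) (Set.Ioi 2) := by
  intro a ha b hb hab
  simp only [Set.mem_Ioi] at ha hb
  rw [Ffun_eq k ha, Ffun_eq k hb]
  exact Hmono k hk (x2_gt_one ha) (x2_strictMono ha hb hab)

end Root

section Lzero

noncomputable def l0 : ℝ := Real.sqrt (2 + Real.sqrt 5)

lemma sqrt5_sq : (Real.sqrt 5) ^ 2 = 5 := Real.sq_sqrt (by norm_num)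

lemma sqrt5_gt_two : 2 < Real.sqrt 5 := by
  have := sqrt5_sq
  nlinarith [Real.sqrt_nonneg 5]

lemma sqrt5_lt_three : Real.sqrt 5 < 3 := by
  have := sqrt5_sq
  nlinarith [Real.sqrt_nonneg 5]

lemma l0_sq : l0 ^ 2 = 2 + Real.sqrt 5 :=
  Real.sq_sqrt (by linarith [Real.sqrt_nonneg 5])

lemma l0_nonneg : 0 ≤ l0 := by unfold l0; exact Real.sqrt_nonneg _

lemma l0_gt_two : 2 < l0 := by
  have h := l0_sq
  have := sqrt5_gt_two
  nlinarith [l0_nonneg]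

lemma l0_lt_three : l0 < 3 := by
  have h := l0_sq
  have := sqrt5_lt_three
  nlinarith [l0_nonneg]

lemma d2f_l0_nonpos : d2f l0 ≤ 0 := by
  -- x2 l0 ^ 3 ≤ l0
  have hl := l0_gt_two
  have hsq := l0_sq
  have h5 := sqrt5_sq
  have h52 := sqrt5_gt_two
  have h53 := sqrt5_lt_three
  set s : ℝ := Real.sqrt (l0 ^ 2 - 4) with hs
  have hs2 : s ^ 2 = Real.sqrt 5 - 2 := by
    rw [hs, Real.sq_sqrt (by nlinarith)]; linarith
  have hsnn : 0 ≤ s := Real.sqrt_nonneg _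
  have hl0nn : (0:ℝ) ≤ l0 := l0_nonneg
  -- key : s * (√5 + 1) ≤ l0 * (3 - √5)
  have key : s * (Real.sqrt 5 + 1) ≤ l0 * (3 - Real.sqrt 5) := by
    nlinarith [sq_nonneg (s * (Real.sqrt 5 + 1) - l0 * (3 - Real.sqrt 5)),
      sq_nonneg (s * (Real.sqrt 5 + 1) + l0 * (3 - Real.sqrt 5)),
      mul_nonneg hsnn hl0nn]
  unfold d2f x2
  rw [← hs]
  nlinarith [hs2, hsq]

end Lzero

section ExistsRho

lemma Ffun_l0_neg (k : ℕ) (hk : 1 ≤ k) : Ffun k l0 < 0 := by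
  have h1 := d2f_l0_nonpos
  have h2 : 0 < x1 l0 ^ k := pow_pos (x1_pos l0_gt_two) k
  unfold Ffun; linarith

lemma x2_three : 2 ≤ x2 3 := by
  have h : (3:ℝ) ^ 2 - 4 = 5 := by norm_num
  unfold x2
  rw [h]
  linarith [sqrt5_gt_two]

lemma Ffun_three_pos (k : ℕ) (hk : 1 ≤ k) : 0 < Ffun k 3 := by
  have h3 : (2:ℝ) < 3 := by norm_num
  have h1 : (8:ℝ) ≤ x2 3 ^ 3 := by
    have h2 := pow_le_pow_left₀ (by norm_num : (0:ℝ) ≤ 2) x2_three 3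
    norm_num at h2; linarith
  have h2 : x1 3 ^ k < 1 := pow_lt_one₀ (x1_pos h3).le (x1_lt_one h3) (by omega)
  unfold Ffun d2f; linarith

lemma exists_rho (k : ℕ) (hk : 1 ≤ k) :
    ∃ ρ : ℝ, l0 < ρ ∧ ρ ≤ 3 ∧ Ffun k ρ = 0 ∧
      ∀ x : ℝ, l0 < x → Ffun k x = 0 → x = ρ := by
  have hle : l0 ≤ 3 := l0_lt_three.le
  have := intermediate_value_Icc hle (Ffun_continuous k).continuousOn
  have h0 : (0:ℝ) ∈ Set.Icc (Ffun k l0) (Ffun k 3) :=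
    ⟨(Ffun_l0_neg k hk).le, (Ffun_three_pos k hk).le⟩
  obtain ⟨ρ, hmem, hρ⟩ := this h0
  have hρ1 : l0 < ρ := by
    rcases eq_or_lt_of_le hmem.1 with h | h
    · exfalso; rw [← h] at hρ; linarith [Ffun_l0_neg k hk]
    · exact h
  refine ⟨ρ, hρ1, hmem.2, hρ, ?_⟩
  intro x hx hFx
  have h2x : 2 < x := lt_trans l0_gt_two hx
  have h2ρ : 2 < ρ := lt_trans l0_gt_two hρ1
  rcases lt_trichotomy x ρ with h | h | h
  · have := Ffun_strictMono k hk (Set.mem_Ioi.2 h2x) (Set.mem_Ioi.2 h2ρ) h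
    rw [hFx, hρ] at this; linarith
  · exact h
  · have := Ffun_strictMono k hk (Set.mem_Ioi.2 h2ρ) (Set.mem_Ioi.2 h2x) h
    rw [hFx, hρ] at this; linarith

end ExistsRho

section TreeAdj

variable {i k j : ℕ}

lemma adj_inl_inl (a b : Fin (i+k+j+6)) :
    (treeT2 i k j).Adj (Sum.inl a) (Sum.inl b) ↔
      ((a:ℕ) + 1 = (b:ℕ) ∨ (b:ℕ) + 1 = (a:ℕ)) := by
  simp only [treeT2, SimpleGraph.fromRel_adj, ne_eq, Sum.inl.injEq]
  constructor
  · rintro ⟨h1, h2⟩; exact h2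
  · intro h2
    refine ⟨fun he => ?_, h2⟩
    subst he
    omega

lemma adj_inl_inr (a : Fin (i+k+j+6)) (t : Fin 4) :
    (treeT2 i k j).Adj (Sum.inl a) (Sum.inr t) ↔
      (((t : ℕ) = 0 ∧ (a : ℕ) = 1) ∨ ((t : ℕ) = 1 ∧ (a : ℕ) = i + 2) ∨
        ((t : ℕ) = 2 ∧ (a : ℕ) = i + k + 3) ∨ ((t : ℕ) = 3 ∧ (a : ℕ) = i + k + j + 4)) := by
  simp [treeT2, SimpleGraph.fromRel_adj]

lemma adj_inr_inl (a : Fin (i+k+j+6)) (t : Fin 4) :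
    (treeT2 i k j).Adj (Sum.inr t) (Sum.inl a) ↔
      (((t : ℕ) = 0 ∧ (a : ℕ) = 1) ∨ ((t : ℕ) = 1 ∧ (a : ℕ) = i + 2) ∨
        ((t : ℕ) = 2 ∧ (a : ℕ) = i + k + 3) ∨ ((t : ℕ) = 3 ∧ (a : ℕ) = i + k + j + 4)) := by
  rw [SimpleGraph.adj_comm]; exact adj_inl_inr a t

lemma adj_inr_inr (t s : Fin 4) : ¬ (treeT2 i k j).Adj (Sum.inr t) (Sum.inr s) := by
  simp [treeT2, SimpleGraph.fromRel_adj]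

end TreeAdj

section SumHelpers

lemma ite_or_add {P Q : Prop} [Decidable P] [Decidable Q] (h : ¬ (P ∧ Q)) (x : ℝ) :
    (if P ∨ Q then x else 0) = (if P then x else 0) + (if Q then x else 0) := by
  by_cases hP : P <;> by_cases hQ : Q <;> simp [hP, hQ] <;> tauto

lemma sum_ite_nat_eq (N : ℕ) (c : ℕ) (f : ℕ → ℝ) :
    ∑ b : Fin N, (if (b:ℕ) = c then f (b:ℕ) else 0) = if c < N then f c else 0 := by
  by_cases h : c < N
  · rw [if_pos h]
    rw [Finset.sum_eq_single (⟨c, h⟩ : Fin N)]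
    · simp
    · intro b _ hb
      rw [if_neg]
      intro hc
      apply hb
      exact Fin.ext hc
    · intro h'; exact absurd (Finset.mem_univ _) h'
  · rw [if_neg h]
    apply Finset.sum_eq_zero
    intro b _
    rw [if_neg]
    intro hc
    exact h (hc ▸ b.isLt)

end SumHelpers

section MulVec

variable {i k j : ℕ}

/-- vector from path-function and pendant-function -/
def gvec (i k j : ℕ) (Gf : ℕ → ℝ) (P : ℕ → ℝ) : (Fin (i+k+j+6) ⊕ Fin 4) → ℝ :=
  fun v => match v with
  | Sum.inl a => Gf (a : ℕ)
  | Sum.inr t => P (t : ℕ)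

lemma mulVec_gvec_inl (Gf : ℕ → ℝ) (P : ℕ → ℝ) (a : Fin (i+k+j+6)) :
    (adjM (treeT2 i k j)).mulVec (gvec i k j Gf P) (Sum.inl a) =
      (if (a:ℕ) + 1 < i+k+j+6 then Gf ((a:ℕ)+1) else 0)
      + (if 1 ≤ (a:ℕ) then Gf ((a:ℕ)-1) else 0)
      + (if (a:ℕ) = 1 then P 0 else 0) + (if (a:ℕ) = i+2 then P 1 else 0)
      + (if (a:ℕ) = i+k+3 then P 2 else 0) + (if (a:ℕ) = i+k+j+4 then P 3 else 0) := by
  unfold Matrix.mulVec dotProduct adjM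
  rw [Fintype.sum_sum_type]
  have hpath : ∑ b : Fin (i+k+j+6),
      (if (treeT2 i k j).Adj (Sum.inl a) (Sum.inl b) then (1:ℝ) else 0) * gvec i k j Gf P (Sum.inl b)
      = (if (a:ℕ) + 1 < i+k+j+6 then Gf ((a:ℕ)+1) else 0)
        + (if 1 ≤ (a:ℕ) then Gf ((a:ℕ)-1) else 0) := by
    have step1 : ∀ b : Fin (i+k+j+6),
        (if (treeT2 i k j).Adj (Sum.inl a) (Sum.inl b) then (1:ℝ) else 0) * gvec i k j Gf P (Sum.inl b)
        = (if (b:ℕ) = (a:ℕ)+1 then Gf (b:ℕ) else 0) + (if (b:ℕ)+1 = (a:ℕ) then Gf (b:ℕ) else 0) := by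
      intro b
      rw [ite_mul, one_mul, zero_mul]
      rw [if_congr (adj_inl_inl a b) rfl rfl]
      show (if ((a:ℕ) + 1 = (b:ℕ) ∨ (b:ℕ) + 1 = (a:ℕ)) then Gf (b:ℕ) else 0) = _
      rw [ite_or_add (by omega)]
      congr 1
      exact if_congr (by omega) rfl rfl
    rw [Finset.sum_congr rfl (fun b _ => step1 b), Finset.sum_add_distrib]
    congr 1
    · rw [sum_ite_nat_eq]
    · by_cases ha : 1 ≤ (a:ℕ)
      · have : ∀ b : Fin (i+k+j+6), (if (b:ℕ)+1 = (a:ℕ) then Gf (b:ℕ) else 0)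
            = (if (b:ℕ) = (a:ℕ)-1 then Gf (b:ℕ) else 0) := fun b => if_congr (by omega) rfl rfl
        rw [Finset.sum_congr rfl (fun b _ => this b), sum_ite_nat_eq, if_pos (by omega), if_pos ha]
      · have : ∀ b : Fin (i+k+j+6), (if (b:ℕ)+1 = (a:ℕ) then Gf (b:ℕ) else 0) = 0 :=
          fun b => if_neg (by omega)
        rw [Finset.sum_congr rfl (fun b _ => this b), Finset.sum_const_zero, if_neg ha]
  have hpend : ∑ t : Fin 4,
      (if (treeT2 i k j).Adj (Sum.inl a) (Sum.inr t) then (1:ℝ) else 0) * gvec i k j Gf P (Sum.inr t)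
      = (if (a:ℕ) = 1 then P 0 else 0) + (if (a:ℕ) = i+2 then P 1 else 0)
      + (if (a:ℕ) = i+k+3 then P 2 else 0) + (if (a:ℕ) = i+k+j+4 then P 3 else 0) := by
    have step : ∀ t : Fin 4, (if (treeT2 i k j).Adj (Sum.inl a) (Sum.inr t) then (1:ℝ) else 0)
        * gvec i k j Gf P (Sum.inr t)
        = (if (((t : ℕ) = 0 ∧ (a : ℕ) = 1) ∨ ((t : ℕ) = 1 ∧ (a : ℕ) = i + 2) ∨
            ((t : ℕ) = 2 ∧ (a : ℕ) = i + k + 3) ∨ ((t : ℕ) = 3 ∧ (a : ℕ) = i + k + j + 4))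
            then P (t:ℕ) else 0) := by
      intro t
      rw [ite_mul, one_mul, zero_mul]
      exact if_congr (adj_inl_inr a t) rfl rfl
    rw [Finset.sum_congr rfl (fun t _ => step t)]
    rw [Fin.sum_univ_four]
    have e0 : ((0:Fin 4):ℕ) = 0 := rfl
    have e1 : ((1:Fin 4):ℕ) = 1 := rfl
    have e2 : ((2:Fin 4):ℕ) = 2 := rfl
    have e3 : ((3:Fin 4):ℕ) = 3 := rfl
    rw [e0, e1, e2, e3]
    norm_num
  rw [hpath, hpend]; ring

end MulVec

section MulVecInr

variable {i k j : ℕ}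

lemma mulVec_gvec_inr (Gf : ℕ → ℝ) (P : ℕ → ℝ) (t : Fin 4) (c : ℕ)
    (hc : ((t:ℕ) = 0 ∧ c = 1) ∨ ((t:ℕ) = 1 ∧ c = i + 2) ∨
      ((t:ℕ) = 2 ∧ c = i + k + 3) ∨ ((t:ℕ) = 3 ∧ c = i + k + j + 4)) :
    (adjM (treeT2 i k j)).mulVec (gvec i k j Gf P) (Sum.inr t) = Gf c := by
  unfold Matrix.mulVec dotProduct adjM
  rw [Fintype.sum_sum_type]
  have hpend : ∑ s : Fin 4,
      (if (treeT2 i k j).Adj (Sum.inr t) (Sum.inr s) then (1:ℝ) else 0) * gvec i k j Gf P (Sum.inr s) = 0 := by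
    apply Finset.sum_eq_zero; intro s _
    rw [if_neg (adj_inr_inr t s), zero_mul]
  have hpath : ∑ b : Fin (i+k+j+6),
      (if (treeT2 i k j).Adj (Sum.inr t) (Sum.inl b) then (1:ℝ) else 0) * gvec i k j Gf P (Sum.inl b)
      = Gf c := by
    have step : ∀ b : Fin (i+k+j+6),
        (if (treeT2 i k j).Adj (Sum.inr t) (Sum.inl b) then (1:ℝ) else 0) * gvec i k j Gf P (Sum.inl b)
        = (if (b:ℕ) = c then Gf (b:ℕ) else 0) := by
      intro b
      rw [ite_mul, one_mul, zero_mul]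
      rw [if_congr (adj_inr_inl b t) rfl rfl]
      exact if_congr (by omega) rfl rfl
    rw [Finset.sum_congr rfl (fun b _ => step b), sum_ite_nat_eq, if_pos (by omega)]
  rw [hpath, hpend, add_zero]

end MulVecInr

section Super

set_option maxHeartbeats 1000000

lemma supersol (i κ j : ℕ) (hi : 2 ≤ i) (hj : 2 ≤ j) (x y : ℝ)
    (hxy : x*y = 1) (hx0 : 0 < x) (hx1 : x < 1) (hy1 : 1 < y)
    (hd : 0 < y^3 - (x+y) - x^(κ+1))
    (hsi : 2*(x+y)*x^(i+1) ≤ x*(y^3-(x+y)-x^(κ+1))*y^(i+2))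
    (hsj : 2*(x+y)*x^(j+1) ≤ x*(y^3-(x+y)-x^(κ+1))*y^(j+2)) :
    ∃ g : (Fin (i+(κ+1)+j+6) ⊕ Fin 4) → ℝ, (∀ v, 0 < g v) ∧
      (∀ v, (adjM (treeT2 i (κ+1) j)).mulVec g v ≤ (x+y) * g v) := by
  have hy0 : 0 < y := by linarith
  have hl0 : 0 < x + y := by linarith
  set n : ℕ := i+(κ+1)+j+5 with hn
  obtain ⟨tL, htL0, hIL⟩ : ∃ t : ℝ, 0 < t ∧ t*(y^(i+2)+x^(i+2)) = 1+x^(κ+2) :=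
    ⟨(1+x^(κ+2))/(y^(i+2)+x^(i+2)), by positivity,
      div_mul_cancel₀ _ (by positivity)⟩
  obtain ⟨tR, htR0, hIR⟩ : ∃ t : ℝ, 0 < t ∧ t*(y^(j+2)+x^(j+2)) = 1+x^(κ+2) :=
    ⟨(1+x^(κ+2))/(y^(j+2)+x^(j+2)), by positivity,
      div_mul_cancel₀ _ (by positivity)⟩
  obtain ⟨Q, hQ0, hQ⟩ : ∃ q : ℝ, 0 < q ∧ q*(x+y) = 1+x^(κ+2) :=
    ⟨(1+x^(κ+2))/(x+y), by positivity, div_mul_cancel₀ _ (ne_of_gt hl0)⟩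
  have hX1 : x^(κ+2) ≤ 1 := pow_le_one₀ hx0.le hx1.le
  set Gf : ℕ → ℝ := fun m =>
    if m = 0 then tL
    else if m ≤ i+2 then tL*(y^m+x^m)
    else if m ≤ i+(κ+1)+3 then x^(m-(i+2)) + x^((i+(κ+1)+3)-m)
    else if m ≤ n-1 then tR*(y^(n-m)+x^(n-m))
    else tR with hGf
  set Pf : ℕ → ℝ := fun t => if t = 0 then tL else if t = 3 then tR else Q with hPf
  -- value lemmas
  have V0 : Gf 0 = tL := by simp [hGf]
  have V1 : ∀ m, 1 ≤ m → m ≤ i+2 → Gf m = tL*(y^m+x^m) := by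
    intro m h1 h2
    simp only [hGf]
    rw [if_neg (by omega), if_pos h2]
  have V2 : ∀ r, r ≤ κ+2 → Gf (i+2+r) = x^r + x^(κ+2-r) := by
    intro r hr
    rcases Nat.eq_zero_or_pos r with h0 | h0
    · subst h0
      rw [V1 (i+2+0) (by omega) (by omega)]
      simp only [Nat.add_zero, Nat.sub_zero, pow_zero]
      rw [hIL]
    · simp only [hGf]
      rw [if_neg (by omega), if_neg (by omega), if_pos (by omega)]
      congr 2 <;> omega
  have V3 : ∀ m, i+(κ+1)+3 ≤ m → m ≤ n-1 → Gf m = tR*(y^(n-m)+x^(n-m)) := by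
    intro m h1 h2
    rcases Nat.eq_or_lt_of_le h1 with h0 | h0
    · rw [← h0]
      have e1 : i+2+(κ+2) = i+(κ+1)+3 := by omega
      have e2 : n - (i+(κ+1)+3) = j+2 := by omega
      rw [← e1, V2 (κ+2) (le_refl _), e1, e2, hIR]
      have e3 : κ+2-(κ+2) = 0 := by omega
      rw [e3, pow_zero]; ring
    · simp only [hGf]
      rw [if_neg (by omega), if_neg (by omega), if_neg (by omega), if_pos h2]
  have V4 : Gf n = tR := by
    simp only [hGf]
    rw [if_neg (by omega), if_neg (by omega), if_neg (by omega), if_neg (by omega)]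
  have hP0 : Pf 0 = tL := by simp [hPf]
  have hP1 : Pf 1 = Q := by simp [hPf]
  have hP2 : Pf 2 = Q := by simp [hPf]
  have hP3 : Pf 3 = tR := by simp [hPf]
  -- positivity
  have hGpos : ∀ m, 0 < Gf m := by
    intro m
    simp only [hGf]
    split_ifs
    · exact htL0
    · exact mul_pos htL0 (by positivity)
    · positivity
    · exact mul_pos htR0 (by positivity)
    · exact htR0
  have hPpos : ∀ t, 0 < Pf t := by
    intro t
    simp only [hPf]
    split_ifs
    · exact htL0
    · exact htR0
    · exact hQ0
  clear_value Gf Pf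
  clear hGf hPf
  refine ⟨gvec i (κ+1) j Gf Pf, ?_, ?_⟩
  · rintro (a | t)
    · exact hGpos _
    · exact hPpos _
  rintro (a | t)
  · -- path vertices
    rw [mulVec_gvec_inl]
    show _ ≤ (x+y) * Gf (a:ℕ)
    have hma : (a:ℕ) < i+(κ+1)+j+6 := a.isLt
    rcases (by omega : (a:ℕ) = 0 ∨ (a:ℕ) = 1 ∨ (2 ≤ (a:ℕ) ∧ (a:ℕ) ≤ i+1) ∨ (a:ℕ) = i+2
        ∨ (i+3 ≤ (a:ℕ) ∧ (a:ℕ) ≤ i+(κ+1)+2) ∨ (a:ℕ) = i+(κ+1)+3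
        ∨ (i+(κ+1)+4 ≤ (a:ℕ) ∧ (a:ℕ) ≤ n-2) ∨ (a:ℕ) = n-1 ∨ (a:ℕ) = n) with
      (h|h|⟨h1,h2⟩|h|⟨h1,h2⟩|h|⟨h1,h2⟩|h|h)
    · -- m = 0
      rw [h]
      rw [if_pos (by omega), if_neg (by omega), if_neg (by omega), if_neg (by omega),
        if_neg (by omega), if_neg (by omega)]
      simp only [add_zero, zero_add]
      rw [V0, V1 (0+1) (by omega) (by omega)]
      apply le_of_eq; ring
    · -- m = 1
      rw [h]
      rw [if_pos (by omega), if_pos (by omega), if_pos (by omega), if_neg (by omega),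
        if_neg (by omega), if_neg (by omega)]
      simp only [add_zero, zero_add]
      have e1 : (1:ℕ)-1 = 0 := rfl
      rw [e1, V0, V1 (1+1) (by omega) (by omega), V1 1 (by omega) (by omega), hP0]
      apply le_of_eq
      linear_combination (-2*tL)*hxy
    · -- left arm interior 2 ≤ m ≤ i+1
      rw [if_pos (by omega), if_pos (by omega), if_neg (by omega), if_neg (by omega),
        if_neg (by omega), if_neg (by omega)]
      simp only [add_zero, zero_add]
      obtain ⟨p, hp⟩ : ∃ p, (a:ℕ) = p+2 := ⟨(a:ℕ)-2, by omega⟩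
      rw [hp]
      have e1 : p+2-1 = p+1 := rfl
      rw [e1, V1 (p+2+1) (by omega) (by omega), V1 (p+1) (by omega) (by omega),
        V1 (p+2) (by omega) (by omega)]
      apply le_of_eq
      linear_combination (-tL*(y^(p+1)+x^(p+1)))*hxy
    · -- B1 : m = i+2
      rw [h]
      rw [if_pos (by omega), if_pos (by omega), if_neg (by omega), if_pos (by omega),
        if_neg (by omega), if_neg (by omega)]
      simp only [add_zero, zero_add]
      have e1 : i+2-1 = i+1 := rfl
      rw [e1]
      have eV2 : Gf (i+2+1) = x^1 + x^(κ+1) := by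
        have h' := V2 1 (by omega)
        have e : κ+2-1 = κ+1 := by omega
        rwa [e] at h'
      rw [eV2, V1 (i+1) (by omega) (by omega), V1 (i+2) (by omega) (by omega), hP1]
      have hTW : tL*y^(i+2) ≤ 2 := by nlinarith [mul_pos htL0 (pow_pos hx0 (i+2))]
      have h52 : (tL*x^(i+1)*(x+y))*y^(i+2) ≤ (x*(y^3-(x+y)-x^(κ+1)))*y^(i+2) := by
        calc (tL*x^(i+1)*(x+y))*y^(i+2) = (tL*y^(i+2))*((x+y)*x^(i+1)) := by ring
          _ ≤ 2*((x+y)*x^(i+1)) := by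
              apply mul_le_mul_of_nonneg_right hTW (by positivity)
          _ = 2*(x+y)*x^(i+1) := by ring
          _ ≤ x*(y^3-(x+y)-x^(κ+1))*y^(i+2) := hsi
          _ = (x*(y^3-(x+y)-x^(κ+1)))*y^(i+2) := by ring
      have h5 : tL*x^(i+1)*(x+y) ≤ x*(y^3-(x+y)-x^(κ+1)) :=
        le_of_mul_le_mul_right h52 (pow_pos hy0 (i+2))
      have hPhi : (x+y)*((x+y)*(1+x^(κ+2))) - (x+y)*(x + x^(κ+1)) - (1+x^(κ+2))
          = (x+y)*(x*(1+x^(κ+2))) + x*(y^3-(x+y)-x^(κ+1)) := by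
        linear_combination (1 - y^2 + x^(κ+2) + x^(κ+1)*y) * hxy
      have e3 : (x+y)*(x*(1+x^(κ+2)))
          = (x+y)*(tL*y^(i+1)) + (x+y)*(x*(x*(tL*x^(i+1)))) := by
        calc (x+y)*(x*(1+x^(κ+2))) = (x+y)*(x*(tL*(y^(i+2)+x^(i+2)))) := by rw [hIL]
          _ = (x+y)*(tL*y^(i+1)) + (x+y)*(x*(x*(tL*x^(i+1)))) := by
              linear_combination ((x+y)*tL*y^(i+1))*hxy
      apply le_of_mul_le_mul_left (a := x+y) ?_ hl0
      have e4 : (x+y)*(x^1 + x^(κ+1) + tL*(y^(i+1)+x^(i+1)) + Q)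
          = (x+y)*(x+x^(κ+1)) + (x+y)*(tL*y^(i+1)) + (x+y)*(tL*x^(i+1)) + (1+x^(κ+2)) := by
        linear_combination hQ
      have goal_eq : (x+y)*((x+y) * (tL*(y^(i+2)+x^(i+2)))) = (x+y)*((x+y)*(1+x^(κ+2))) := by
        rw [hIL]
      rw [e4, goal_eq]
      have hnn : 0 ≤ (x+y)*(x*(x*(tL*x^(i+1)))) :=
        mul_nonneg hl0.le (mul_nonneg hx0.le (mul_nonneg hx0.le
          (mul_nonneg htL0.le (pow_nonneg hx0.le _))))
      have h5' : (x+y)*(tL*x^(i+1)) ≤ x*(y^3-(x+y)-x^(κ+1)) := by linear_combination h5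
      linarith [hPhi, e3, h5', hnn]
    · -- middle interior
      rw [if_pos (by omega), if_pos (by omega), if_neg (by omega), if_neg (by omega),
        if_neg (by omega), if_neg (by omega)]
      simp only [add_zero, zero_add]
      obtain ⟨q, hq⟩ : ∃ q, (a:ℕ) = i+2+(q+1) := ⟨(a:ℕ)-(i+3), by omega⟩
      have hqk : q+1 ≤ κ+1 := by omega
      rw [hq]
      have e1 : i+2+(q+1)+1 = i+2+(q+2) := by omega
      have e2 : i+2+(q+1)-1 = i+2+q := by omega
      rw [e1, e2, V2 (q+2) (by omega), V2 q (by omega), V2 (q+1) (by omega)]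
      obtain ⟨d, hd⟩ : ∃ d, κ = q + d := ⟨κ-q, by omega⟩
      have f1 : κ+2-(q+2) = d := by omega
      have f2 : κ+2-q = d+2 := by omega
      have f3 : κ+2-(q+1) = d+1 := by omega
      rw [f1, f2, f3]
      apply le_of_eq
      linear_combination (-(x^q + x^d))*hxy
    · -- B2 : m = i+(κ+1)+3
      rw [h]
      rw [if_pos (by omega), if_pos (by omega), if_neg (by omega), if_neg (by omega),
        if_pos (by omega), if_neg (by omega)]
      simp only [add_zero, zero_add]
      have e1 : i+(κ+1)+3-1 = i+2+(κ+1) := by omega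
      rw [e1]
      have eV2 : Gf (i+2+(κ+1)) = x^(κ+1) + x^1 := by
        have h' := V2 (κ+1) (by omega)
        have e : κ+2-(κ+1) = 1 := by omega
        rwa [e] at h'
      have eV3 : Gf (i+(κ+1)+3+1) = tR*(y^(j+1)+x^(j+1)) := by
        have h' := V3 (i+(κ+1)+3+1) (by omega) (by omega)
        have e : n - (i+(κ+1)+3+1) = j+1 := by omega
        rwa [e] at h'
      have eG : Gf (i+(κ+1)+3) = x^(κ+2) + x^0 := by
        have e1' : i+2+(κ+2) = i+(κ+1)+3 := by omega
        have h' := V2 (κ+2) (le_refl _)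
        have e : κ+2-(κ+2) = 0 := by omega
        rw [e, e1'] at h'
        exact h'
      rw [eV2, eV3, eG, hP2]
      have hTW : tR*y^(j+2) ≤ 2 := by nlinarith [mul_pos htR0 (pow_pos hx0 (j+2))]
      have h52 : (tR*x^(j+1)*(x+y))*y^(j+2) ≤ (x*(y^3-(x+y)-x^(κ+1)))*y^(j+2) := by
        calc (tR*x^(j+1)*(x+y))*y^(j+2) = (tR*y^(j+2))*((x+y)*x^(j+1)) := by ring
          _ ≤ 2*((x+y)*x^(j+1)) := by
              apply mul_le_mul_of_nonneg_right hTW (by positivity)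
          _ = 2*(x+y)*x^(j+1) := by ring
          _ ≤ x*(y^3-(x+y)-x^(κ+1))*y^(j+2) := hsj
          _ = (x*(y^3-(x+y)-x^(κ+1)))*y^(j+2) := by ring
      have h5 : tR*x^(j+1)*(x+y) ≤ x*(y^3-(x+y)-x^(κ+1)) :=
        le_of_mul_le_mul_right h52 (pow_pos hy0 (j+2))
      have hPhi : (x+y)*((x+y)*(1+x^(κ+2))) - (x+y)*(x + x^(κ+1)) - (1+x^(κ+2))
          = (x+y)*(x*(1+x^(κ+2))) + x*(y^3-(x+y)-x^(κ+1)) := by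
        linear_combination (1 - y^2 + x^(κ+2) + x^(κ+1)*y) * hxy
      have e3 : (x+y)*(x*(1+x^(κ+2)))
          = (x+y)*(tR*y^(j+1)) + (x+y)*(x*(x*(tR*x^(j+1)))) := by
        calc (x+y)*(x*(1+x^(κ+2))) = (x+y)*(x*(tR*(y^(j+2)+x^(j+2)))) := by rw [hIR]
          _ = (x+y)*(tR*y^(j+1)) + (x+y)*(x*(x*(tR*x^(j+1)))) := by
              linear_combination ((x+y)*tR*y^(j+1))*hxy
      apply le_of_mul_le_mul_left (a := x+y) ?_ hl0
      have e4 : (x+y)*(tR*(y^(j+1)+x^(j+1)) + (x^(κ+1) + x^1) + Q)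
          = (x+y)*(x+x^(κ+1)) + (x+y)*(tR*y^(j+1)) + (x+y)*(tR*x^(j+1)) + (1+x^(κ+2)) := by
        linear_combination hQ
      have goal_eq : (x+y)*((x+y) * (x^(κ+2) + x^0)) = (x+y)*((x+y)*(1+x^(κ+2))) := by
        rw [pow_zero]; ring
      rw [e4, goal_eq]
      have hnn : 0 ≤ (x+y)*(x*(x*(tR*x^(j+1)))) :=
        mul_nonneg hl0.le (mul_nonneg hx0.le (mul_nonneg hx0.le
          (mul_nonneg htR0.le (pow_nonneg hx0.le _))))
      have h5' : (x+y)*(tR*x^(j+1)) ≤ x*(y^3-(x+y)-x^(κ+1)) := by linear_combination h5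
      linarith [hPhi, e3, h5', hnn]
    · -- right arm interior
      rw [if_pos (by omega), if_pos (by omega), if_neg (by omega), if_neg (by omega),
        if_neg (by omega), if_neg (by omega)]
      simp only [add_zero, zero_add]
      obtain ⟨d, hd⟩ : ∃ d, n - (a:ℕ) = d+1 := ⟨n-(a:ℕ)-1, by omega⟩
      have eA : Gf ((a:ℕ)+1) = tR*(y^d+x^d) := by
        have h' := V3 ((a:ℕ)+1) (by omega) (by omega)
        have e : n - ((a:ℕ)+1) = d := by omega
        rwa [e] at h'
      have eB : Gf ((a:ℕ)-1) = tR*(y^(d+2)+x^(d+2)) := by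
        have h' := V3 ((a:ℕ)-1) (by omega) (by omega)
        have e : n - ((a:ℕ)-1) = d+2 := by omega
        rwa [e] at h'
      have eC : Gf (a:ℕ) = tR*(y^(d+1)+x^(d+1)) := by
        have h' := V3 (a:ℕ) (by omega) (by omega)
        rwa [hd] at h'
      rw [eA, eB, eC]
      apply le_of_eq
      linear_combination (-tR*(y^d+x^d))*hxy
    · -- m = n-1
      rw [h]
      rw [if_pos (by omega), if_pos (by omega), if_neg (by omega), if_neg (by omega),
        if_neg (by omega), if_pos (by omega)]
      simp only [add_zero, zero_add]
      have e1 : n-1+1 = n := by omega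
      rw [e1, V4]
      have eB : Gf (n-1-1) = tR*(y^2+x^2) := by
        have h' := V3 (n-1-1) (by omega) (by omega)
        have e : n - (n-1-1) = 2 := by omega
        rwa [e] at h'
      have eC : Gf (n-1) = tR*(y^1+x^1) := by
        have h' := V3 (n-1) (by omega) (by omega)
        have e : n - (n-1) = 1 := by omega
        rwa [e] at h'
      rw [eB, eC, hP3]
      apply le_of_eq
      linear_combination (-2*tR)*hxy
    · -- m = n
      rw [h]
      rw [if_neg (by omega), if_pos (by omega), if_neg (by omega), if_neg (by omega),
        if_neg (by omega), if_neg (by omega)]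
      simp only [add_zero, zero_add]
      have eB : Gf (n-1) = tR*(y^1+x^1) := by
        have h' := V3 (n-1) (by omega) (by omega)
        have e : n - (n-1) = 1 := by omega
        rwa [e] at h'
      rw [eB, V4]
      apply le_of_eq; ring
  · -- pendant vertices
    fin_cases t
    · rw [mulVec_gvec_inr Gf Pf _ 1 (by norm_num)]
      show _ ≤ (x+y) * Pf 0
      rw [hP0, V1 1 (by omega) (by omega)]
      apply le_of_eq; ring
    · rw [mulVec_gvec_inr Gf Pf _ (i+2) (by norm_num)]
      show _ ≤ (x+y) * Pf 1
      rw [hP1, V1 (i+2) (by omega) (by omega)]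
      apply le_of_eq
      calc tL*(y^(i+2)+x^(i+2)) = 1+x^(κ+2) := hIL
        _ = (x+y)*Q := by linear_combination -hQ
    · rw [mulVec_gvec_inr Gf Pf _ (i+(κ+1)+3) (by norm_num)]
      show _ ≤ (x+y) * Pf 2
      have eG : Gf (i+(κ+1)+3) = x^(κ+2) + x^0 := by
        have e1' : i+2+(κ+2) = i+(κ+1)+3 := by omega
        have h' := V2 (κ+2) (le_refl _)
        have e : κ+2-(κ+2) = 0 := by omega
        rw [e, e1'] at h'
        exact h'
      rw [hP2, eG]
      apply le_of_eq
      calc x^(κ+2) + x^0 = 1+x^(κ+2) := by rw [pow_zero]; ring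
        _ = (x+y)*Q := by linear_combination -hQ
    · rw [mulVec_gvec_inr Gf Pf _ (i+(κ+1)+j+4) (by norm_num)]
      show _ ≤ (x+y) * Pf 3
      have eC : Gf (i+(κ+1)+j+4) = tR*(y^1+x^1) := by
        have h' := V3 (i+(κ+1)+j+4) (by omega) (by omega)
        have e : n - (i+(κ+1)+j+4) = 1 := by omega
        rwa [e] at h'
      rw [hP3, eC]
      apply le_of_eq; ring

end Super

section Sub

set_option maxHeartbeats 1000000

lemma subsol (i κ j : ℕ) (hi : 2 ≤ i) (hj : 2 ≤ j) (x y : ℝ)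
    (hxy : x*y = 1) (hx0 : 0 < x) (hx1 : x < 1) (hy1 : 1 < y)
    (hd : 0 < x^(κ+1) - y^3 + (x+y))
    (hsi : 2*(x+y)*x^i ≤ x*(x^(κ+1)-y^3+(x+y))*(y^(i+1)-1))
    (hsj : 2*(x+y)*x^j ≤ x*(x^(κ+1)-y^3+(x+y))*(y^(j+1)-1)) :
    ∃ g : (Fin (i+(κ+1)+j+6) ⊕ Fin 4) → ℝ, (∀ v, 0 ≤ g v) ∧ g ≠ 0 ∧
      (∀ v, (x+y) * g v ≤ (adjM (treeT2 i (κ+1) j)).mulVec g v) := by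
  have hy0 : 0 < y := by linarith
  have hl0 : 0 < x + y := by linarith
  have hxley : x ≤ y := by linarith
  set n : ℕ := i+(κ+1)+j+5 with hn
  have hXle : ∀ m : ℕ, x^m ≤ 1 := fun m => pow_le_one₀ hx0.le hx1.le
  have hYgt : ∀ m : ℕ, 1 < y^(m+1) := fun m => one_lt_pow₀ hy1 (by omega)
  have hDLpos : 0 < y^(i+1)-x^(i+1) := by
    have := hXle (i+1); have := hYgt i; linarith
  have hDRpos : 0 < y^(j+1)-x^(j+1) := by
    have := hXle (j+1); have := hYgt j; linarith
  obtain ⟨cL, hcL0, hIL⟩ : ∃ t : ℝ, 0 < t ∧ t*(y^(i+1)-x^(i+1)) = 1+x^(κ+2) :=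
    ⟨(1+x^(κ+2))/(y^(i+1)-x^(i+1)), by positivity, div_mul_cancel₀ _ (ne_of_gt hDLpos)⟩
  obtain ⟨cR, hcR0, hIR⟩ : ∃ t : ℝ, 0 < t ∧ t*(y^(j+1)-x^(j+1)) = 1+x^(κ+2) :=
    ⟨(1+x^(κ+2))/(y^(j+1)-x^(j+1)), by positivity, div_mul_cancel₀ _ (ne_of_gt hDRpos)⟩
  obtain ⟨Q, hQ0, hQ⟩ : ∃ q : ℝ, 0 < q ∧ q*(x+y) = 1+x^(κ+2) :=
    ⟨(1+x^(κ+2))/(x+y), by positivity, div_mul_cancel₀ _ (ne_of_gt hl0)⟩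
  have hX1 : x^(κ+2) ≤ 1 := hXle _
  set Gf : ℕ → ℝ := fun m =>
    if m = 0 then 0
    else if m ≤ i+2 then cL*(y^(m-1)-x^(m-1))
    else if m ≤ i+(κ+1)+3 then x^(m-(i+2)) + x^((i+(κ+1)+3)-m)
    else if m ≤ n-1 then cR*(y^(n-m-1)-x^(n-m-1))
    else 0 with hGf
  set Pf : ℕ → ℝ := fun t => if t = 0 then 0 else if t = 3 then 0 else Q with hPf
  have V0 : Gf 0 = 0 := by simp [hGf]
  have V1 : ∀ p, p ≤ i+1 → Gf (p+1) = cL*(y^p-x^p) := by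
    intro p hp
    simp only [hGf]
    rw [if_neg (by omega), if_pos (by omega)]
    have e : p+1-1 = p := rfl
    rw [e]
  have V2 : ∀ r, r ≤ κ+2 → Gf (i+2+r) = x^r + x^(κ+2-r) := by
    intro r hr
    rcases Nat.eq_zero_or_pos r with h0 | h0
    · subst h0
      have e : i+2+0 = (i+1)+1 := by omega
      rw [e, V1 (i+1) (by omega), hIL]
      simp only [Nat.sub_zero, pow_zero]
    · simp only [hGf]
      rw [if_neg (by omega), if_neg (by omega), if_pos (by omega)]
      congr 2 <;> omega
  have V3 : ∀ m, i+(κ+1)+3 ≤ m → m ≤ n-1 → Gf m = cR*(y^(n-m-1)-x^(n-m-1)) := by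
    intro m h1 h2
    rcases Nat.eq_or_lt_of_le h1 with h0 | h0
    · rw [← h0]
      have e1 : i+2+(κ+2) = i+(κ+1)+3 := by omega
      have e2 : n - (i+(κ+1)+3) - 1 = j+1 := by omega
      rw [← e1, V2 (κ+2) (le_refl _), e1, e2, hIR]
      have e3 : κ+2-(κ+2) = 0 := by omega
      rw [e3, pow_zero]; ring
    · simp only [hGf]
      rw [if_neg (by omega), if_neg (by omega), if_neg (by omega), if_pos h2]
  have V4 : Gf n = 0 := by
    simp only [hGf]
    rw [if_neg (by omega), if_neg (by omega), if_neg (by omega), if_neg (by omega)]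
  have hP0 : Pf 0 = 0 := by simp [hPf]
  have hP1 : Pf 1 = Q := by simp [hPf]
  have hP2 : Pf 2 = Q := by simp [hPf]
  have hP3 : Pf 3 = 0 := by simp [hPf]
  have hGnn : ∀ m, 0 ≤ Gf m := by
    intro m
    simp only [hGf]
    split_ifs
    · exact le_rfl
    · exact mul_nonneg hcL0.le (sub_nonneg.2 (pow_le_pow_left₀ hx0.le hxley _))
    · positivity
    · exact mul_nonneg hcR0.le (sub_nonneg.2 (pow_le_pow_left₀ hx0.le hxley _))
    · exact le_rfl
  have hPnn : ∀ t, 0 ≤ Pf t := by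
    intro t
    simp only [hPf]
    split_ifs
    · exact le_rfl
    · exact le_rfl
    · exact hQ0.le
  have hGmid : Gf (i+2) = x^0 + x^(κ+2) := by
    have h' := V2 0 (by omega)
    have e : κ+2-0 = κ+2 := rfl
    rw [e] at h'
    have e2 : i+2+0 = i+2 := rfl
    rwa [e2] at h'
  clear_value Gf Pf
  clear hGf hPf
  refine ⟨gvec i (κ+1) j Gf Pf, ?_, ?_, ?_⟩
  · rintro (a | t)
    · exact hGnn _
    · exact hPnn _
  · intro hzero
    have h0 := congrFun hzero (Sum.inl (⟨i+2, by omega⟩ : Fin (i+(κ+1)+j+6)))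
    have hval : gvec i (κ+1) j Gf Pf (Sum.inl (⟨i+2, by omega⟩ : Fin (i+(κ+1)+j+6))) = Gf (i+2) := rfl
    rw [hval, hGmid] at h0
    have : (0:ℝ) < x^0 + x^(κ+2) := by positivity
    rw [h0] at this
    exact lt_irrefl 0 this
  rintro (a | t)
  · rw [mulVec_gvec_inl]
    show (x+y) * Gf (a:ℕ) ≤ _
    have hma : (a:ℕ) < i+(κ+1)+j+6 := a.isLt
    rcases (by omega : (a:ℕ) = 0 ∨ (a:ℕ) = 1 ∨ (2 ≤ (a:ℕ) ∧ (a:ℕ) ≤ i+1) ∨ (a:ℕ) = i+2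
        ∨ (i+3 ≤ (a:ℕ) ∧ (a:ℕ) ≤ i+(κ+1)+2) ∨ (a:ℕ) = i+(κ+1)+3
        ∨ (i+(κ+1)+4 ≤ (a:ℕ) ∧ (a:ℕ) ≤ n-2) ∨ (a:ℕ) = n-1 ∨ (a:ℕ) = n) with
      (h|h|⟨h1,h2⟩|h|⟨h1,h2⟩|h|⟨h1,h2⟩|h|h)
    · -- m = 0
      rw [h]
      rw [if_pos (by omega), if_neg (by omega), if_neg (by omega), if_neg (by omega),
        if_neg (by omega), if_neg (by omega)]
      simp only [add_zero, zero_add]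
      have hG1 : Gf 1 = cL*(y^0-x^0) := V1 0 (by omega)
      rw [V0, hG1]
      apply le_of_eq; ring
    · -- m = 1
      rw [h]
      rw [if_pos (by omega), if_pos (by omega), if_pos (by omega), if_neg (by omega),
        if_neg (by omega), if_neg (by omega)]
      simp only [add_zero, zero_add]
      have hG2 : Gf (1+1) = cL*(y^1-x^1) := V1 1 (by omega)
      have hG0 : Gf (1-1) = 0 := V0
      have hG1 : Gf 1 = cL*(y^0-x^0) := V1 0 (by omega)
      rw [hG2, hG0, hG1, hP0]
      have h01 : 0 ≤ cL*(y^1-x^1) :=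
        mul_nonneg hcL0.le (sub_nonneg.2 (pow_le_pow_left₀ hx0.le hxley 1))
      have hLHS : (x+y)*(cL*(y^0-x^0)) = 0 := by ring
      linarith [h01, hLHS]
    · -- left arm interior
      rw [if_pos (by omega), if_pos (by omega), if_neg (by omega), if_neg (by omega),
        if_neg (by omega), if_neg (by omega)]
      simp only [add_zero, zero_add]
      obtain ⟨p, hp⟩ : ∃ p, (a:ℕ) = p+2 := ⟨(a:ℕ)-2, by omega⟩
      rw [hp]
      have hA : Gf (p+2+1) = cL*(y^(p+2)-x^(p+2)) := V1 (p+2) (by omega)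
      have hB : Gf (p+2-1) = cL*(y^p-x^p) := V1 p (by omega)
      have hC : Gf (p+2) = cL*(y^(p+1)-x^(p+1)) := V1 (p+1) (by omega)
      rw [hA, hB, hC]
      apply le_of_eq
      linear_combination (cL*(y^p-x^p))*hxy
    · -- B1
      rw [h]
      rw [if_pos (by omega), if_pos (by omega), if_neg (by omega), if_pos (by omega),
        if_neg (by omega), if_neg (by omega)]
      simp only [add_zero, zero_add]
      have e1 : i+2-1 = i+1 := rfl
      rw [e1]
      have eV2 : Gf (i+2+1) = x^1 + x^(κ+1) := by
        have h' := V2 1 (by omega)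
        have e : κ+2-1 = κ+1 := by omega
        rwa [e] at h'
      have eArm : Gf (i+1) = cL*(y^i-x^i) := V1 i (by omega)
      have eSelf : Gf (i+2) = cL*(y^(i+1)-x^(i+1)) := V1 (i+1) (by omega)
      rw [eV2, eArm, eSelf, hP1]
      -- branch inequality (sub direction)
      have hIL2 : cL*y^(i+1) - cL*x^(i+1) = 1+x^(κ+2) := by linear_combination hIL
      have hCB : cL*(y^(i+1)-1) ≤ 2 := by
        have hA : 0 ≤ cL*(1-x^(i+1)) := mul_nonneg hcL0.le (by linarith [hXle (i+1)])
        nlinarith [hIL2, hX1]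
      have hypos : 0 < y^(i+1)-1 := by linarith [hYgt i]
      have h52 : ((x+y)*(cL*x^i))*(y^(i+1)-1) ≤ (x*(x^(κ+1)-y^3+(x+y)))*(y^(i+1)-1) := by
        calc ((x+y)*(cL*x^i))*(y^(i+1)-1) = (cL*(y^(i+1)-1))*((x+y)*x^i) := by ring
          _ ≤ 2*((x+y)*x^i) := by
              apply mul_le_mul_of_nonneg_right hCB (by positivity)
          _ = 2*(x+y)*x^i := by ring
          _ ≤ x*(x^(κ+1)-y^3+(x+y))*(y^(i+1)-1) := hsi
          _ = (x*(x^(κ+1)-y^3+(x+y)))*(y^(i+1)-1) := by ring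
      have h5 : (x+y)*(cL*x^i) ≤ x*(x^(κ+1)-y^3+(x+y)) :=
        le_of_mul_le_mul_right h52 hypos
      have hPhi : (x+y)*((x+y)*(1+x^(κ+2))) - (x+y)*(x + x^(κ+1)) - (1+x^(κ+2))
          = (x+y)*(x*(1+x^(κ+2))) - x*(x^(κ+1)-y^3+(x+y)) := by
        linear_combination (1 - y^2 + x^(κ+2) + x^(κ+1)*y) * hxy
      have e3 : (x+y)*(x*(1+x^(κ+2)))
          = (x+y)*(cL*y^i) - (x+y)*(x*(x*(cL*x^i))) := by
        calc (x+y)*(x*(1+x^(κ+2))) = (x+y)*(x*(cL*(y^(i+1)-x^(i+1)))) := by rw [hIL]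
          _ = (x+y)*(cL*y^i) - (x+y)*(x*(x*(cL*x^i))) := by
              linear_combination ((x+y)*cL*y^i)*hxy
      apply le_of_mul_le_mul_left (a := x+y) ?_ hl0
      have e4 : (x+y)*(x^1 + x^(κ+1) + cL*(y^i-x^i) + Q)
          = (x+y)*(x+x^(κ+1)) + (x+y)*(cL*y^i) - (x+y)*(cL*x^i) + (1+x^(κ+2)) := by
        linear_combination hQ
      have goal_eq : (x+y)*((x+y) * (cL*(y^(i+1)-x^(i+1)))) = (x+y)*((x+y)*(1+x^(κ+2))) := by
        rw [hIL]
      rw [e4, goal_eq]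
      have hnn : 0 ≤ (x+y)*(x*(x*(cL*x^i))) :=
        mul_nonneg hl0.le (mul_nonneg hx0.le (mul_nonneg hx0.le
          (mul_nonneg hcL0.le (pow_nonneg hx0.le _))))
      linarith [hPhi, e3, h5, hnn]
    · -- middle interior
      rw [if_pos (by omega), if_pos (by omega), if_neg (by omega), if_neg (by omega),
        if_neg (by omega), if_neg (by omega)]
      simp only [add_zero, zero_add]
      obtain ⟨q, hq⟩ : ∃ q, (a:ℕ) = i+2+(q+1) := ⟨(a:ℕ)-(i+3), by omega⟩
      have hqk : q+1 ≤ κ+1 := by omega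
      rw [hq]
      have e1 : i+2+(q+1)+1 = i+2+(q+2) := by omega
      have e2 : i+2+(q+1)-1 = i+2+q := by omega
      rw [e1, e2, V2 (q+2) (by omega), V2 q (by omega), V2 (q+1) (by omega)]
      obtain ⟨d, hd'⟩ : ∃ d, κ = q + d := ⟨κ-q, by omega⟩
      have f1 : κ+2-(q+2) = d := by omega
      have f2 : κ+2-q = d+2 := by omega
      have f3 : κ+2-(q+1) = d+1 := by omega
      rw [f1, f2, f3]
      apply le_of_eq
      linear_combination (x^q + x^d)*hxy
    · -- B2
      rw [h]
      rw [if_pos (by omega), if_pos (by omega), if_neg (by omega), if_neg (by omega),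
        if_pos (by omega), if_neg (by omega)]
      simp only [add_zero, zero_add]
      have e1 : i+(κ+1)+3-1 = i+2+(κ+1) := by omega
      rw [e1]
      have eV2 : Gf (i+2+(κ+1)) = x^(κ+1) + x^1 := by
        have h' := V2 (κ+1) (by omega)
        have e : κ+2-(κ+1) = 1 := by omega
        rwa [e] at h'
      have eV3 : Gf (i+(κ+1)+3+1) = cR*(y^j-x^j) := by
        have h' := V3 (i+(κ+1)+3+1) (by omega) (by omega)
        have e : n - (i+(κ+1)+3+1) - 1 = j := by omega
        rwa [e] at h'
      have eG : Gf (i+(κ+1)+3) = x^(κ+2) + x^0 := by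
        have e1' : i+2+(κ+2) = i+(κ+1)+3 := by omega
        have h' := V2 (κ+2) (le_refl _)
        have e : κ+2-(κ+2) = 0 := by omega
        rw [e, e1'] at h'
        exact h'
      rw [eV2, eV3, eG, hP2]
      have hIR2 : cR*y^(j+1) - cR*x^(j+1) = 1+x^(κ+2) := by linear_combination hIR
      have hCB : cR*(y^(j+1)-1) ≤ 2 := by
        have hA : 0 ≤ cR*(1-x^(j+1)) := mul_nonneg hcR0.le (by linarith [hXle (j+1)])
        nlinarith [hIR2, hX1]
      have hypos : 0 < y^(j+1)-1 := by linarith [hYgt j]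
      have h52 : ((x+y)*(cR*x^j))*(y^(j+1)-1) ≤ (x*(x^(κ+1)-y^3+(x+y)))*(y^(j+1)-1) := by
        calc ((x+y)*(cR*x^j))*(y^(j+1)-1) = (cR*(y^(j+1)-1))*((x+y)*x^j) := by ring
          _ ≤ 2*((x+y)*x^j) := by
              apply mul_le_mul_of_nonneg_right hCB (by positivity)
          _ = 2*(x+y)*x^j := by ring
          _ ≤ x*(x^(κ+1)-y^3+(x+y))*(y^(j+1)-1) := hsj
          _ = (x*(x^(κ+1)-y^3+(x+y)))*(y^(j+1)-1) := by ring
      have h5 : (x+y)*(cR*x^j) ≤ x*(x^(κ+1)-y^3+(x+y)) :=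
        le_of_mul_le_mul_right h52 hypos
      have hPhi : (x+y)*((x+y)*(1+x^(κ+2))) - (x+y)*(x + x^(κ+1)) - (1+x^(κ+2))
          = (x+y)*(x*(1+x^(κ+2))) - x*(x^(κ+1)-y^3+(x+y)) := by
        linear_combination (1 - y^2 + x^(κ+2) + x^(κ+1)*y) * hxy
      have e3 : (x+y)*(x*(1+x^(κ+2)))
          = (x+y)*(cR*y^j) - (x+y)*(x*(x*(cR*x^j))) := by
        calc (x+y)*(x*(1+x^(κ+2))) = (x+y)*(x*(cR*(y^(j+1)-x^(j+1)))) := by rw [hIR]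
          _ = (x+y)*(cR*y^j) - (x+y)*(x*(x*(cR*x^j))) := by
              linear_combination ((x+y)*cR*y^j)*hxy
      apply le_of_mul_le_mul_left (a := x+y) ?_ hl0
      have e4 : (x+y)*(cR*(y^j-x^j) + (x^(κ+1) + x^1) + Q)
          = (x+y)*(x+x^(κ+1)) + (x+y)*(cR*y^j) - (x+y)*(cR*x^j) + (1+x^(κ+2)) := by
        linear_combination hQ
      have goal_eq : (x+y)*((x+y) * (x^(κ+2) + x^0)) = (x+y)*((x+y)*(1+x^(κ+2))) := by
        rw [pow_zero]; ring
      rw [e4, goal_eq]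
      have hnn : 0 ≤ (x+y)*(x*(x*(cR*x^j))) :=
        mul_nonneg hl0.le (mul_nonneg hx0.le (mul_nonneg hx0.le
          (mul_nonneg hcR0.le (pow_nonneg hx0.le _))))
      linarith [hPhi, e3, h5, hnn]
    · -- right arm interior
      rw [if_pos (by omega), if_pos (by omega), if_neg (by omega), if_neg (by omega),
        if_neg (by omega), if_neg (by omega)]
      simp only [add_zero, zero_add]
      obtain ⟨d, hd'⟩ : ∃ d, n - (a:ℕ) = d+2 := ⟨n-(a:ℕ)-2, by omega⟩
      have eA : Gf ((a:ℕ)+1) = cR*(y^d-x^d) := by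
        have h' := V3 ((a:ℕ)+1) (by omega) (by omega)
        have e : n - ((a:ℕ)+1) - 1 = d := by omega
        rwa [e] at h'
      have eB : Gf ((a:ℕ)-1) = cR*(y^(d+2)-x^(d+2)) := by
        have h' := V3 ((a:ℕ)-1) (by omega) (by omega)
        have e : n - ((a:ℕ)-1) - 1 = d+2 := by omega
        rwa [e] at h'
      have eC : Gf (a:ℕ) = cR*(y^(d+1)-x^(d+1)) := by
        have h' := V3 (a:ℕ) (by omega) (by omega)
        have e : n - (a:ℕ) - 1 = d+1 := by omega
        rwa [e] at h'
      rw [eA, eB, eC]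
      apply le_of_eq
      linear_combination (cR*(y^d-x^d))*hxy
    · -- m = n-1
      rw [h]
      rw [if_pos (by omega), if_pos (by omega), if_neg (by omega), if_neg (by omega),
        if_neg (by omega), if_pos (by omega)]
      simp only [add_zero, zero_add]
      have e1 : n-1+1 = n := by omega
      rw [e1, V4]
      have eB : Gf (n-1-1) = cR*(y^1-x^1) := by
        have h' := V3 (n-1-1) (by omega) (by omega)
        have e : n - (n-1-1) - 1 = 1 := by omega
        rwa [e] at h'
      have eC : Gf (n-1) = cR*(y^0-x^0) := by
        have h' := V3 (n-1) (by omega) (by omega)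
        have e : n - (n-1) - 1 = 0 := by omega
        rwa [e] at h'
      rw [eB, eC, hP3]
      have h01 : 0 ≤ cR*(y^1-x^1) := mul_nonneg hcR0.le (by nlinarith)
      have hLHS : (x+y)*(cR*(y^0-x^0)) = 0 := by ring
      linarith [h01, hLHS]
    · -- m = n
      rw [h]
      rw [if_neg (by omega), if_pos (by omega), if_neg (by omega), if_neg (by omega),
        if_neg (by omega), if_neg (by omega)]
      simp only [add_zero, zero_add]
      have eB : Gf (n-1) = cR*(y^0-x^0) := by
        have h' := V3 (n-1) (by omega) (by omega)
        have e : n - (n-1) - 1 = 0 := by omega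
        rwa [e] at h'
      rw [eB, V4]
      apply le_of_eq; ring
  · fin_cases t
    · rw [mulVec_gvec_inr Gf Pf _ 1 (by norm_num)]
      show (x+y) * Pf 0 ≤ _
      have hG1 : Gf 1 = cL*(y^0-x^0) := V1 0 (by omega)
      rw [hP0, hG1]
      apply le_of_eq; ring
    · rw [mulVec_gvec_inr Gf Pf _ (i+2) (by norm_num)]
      show (x+y) * Pf 1 ≤ _
      have hG : Gf (i+2) = cL*(y^(i+1)-x^(i+1)) := V1 (i+1) (by omega)
      rw [hP1, hG]
      apply le_of_eq
      calc (x+y)*Q = 1+x^(κ+2) := by linear_combination hQ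
        _ = cL*(y^(i+1)-x^(i+1)) := hIL.symm
    · rw [mulVec_gvec_inr Gf Pf _ (i+(κ+1)+3) (by norm_num)]
      show (x+y) * Pf 2 ≤ _
      have eG : Gf (i+(κ+1)+3) = x^(κ+2) + x^0 := by
        have e1' : i+2+(κ+2) = i+(κ+1)+3 := by omega
        have h' := V2 (κ+2) (le_refl _)
        have e : κ+2-(κ+2) = 0 := by omega
        rw [e, e1'] at h'
        exact h'
      rw [hP2, eG]
      apply le_of_eq
      calc (x+y)*Q = 1+x^(κ+2) := by linear_combination hQ
        _ = x^(κ+2) + x^0 := by rw [pow_zero]; ring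
    · rw [mulVec_gvec_inr Gf Pf _ (i+(κ+1)+j+4) (by norm_num)]
      show (x+y) * Pf 3 ≤ _
      have eC : Gf (i+(κ+1)+j+4) = cR*(y^0-x^0) := by
        have h' := V3 (i+(κ+1)+j+4) (by omega) (by omega)
        have e : n - (i+(κ+1)+j+4) - 1 = 0 := by omega
        rwa [e] at h'
      rw [hP3, eC]
      apply le_of_eq; ring

end Sub


section Smallness

lemma smallness_super (x y c : ℝ) (hx0 : 0 < x) (hx1 : x < 1) (hy1 : 1 < y)
    (hxy : x*y = 1) (hc : 0 < c) :
    ∃ M : ℕ, ∀ i, M ≤ i → 2*(x+y)*x^(i+1) ≤ x*c*y^(i+2) := by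
  have hl0 : 0 < x+y := by linarith
  obtain ⟨N, hN⟩ := exists_pow_lt_of_lt_one (show 0 < x*c/(2*(x+y)) by positivity) hx1
  refine ⟨N, fun i hi => ?_⟩
  have h1 : x^(i+1) ≤ x^N := pow_le_pow_of_le_one hx0.le hx1.le (by omega)
  have h2 : 2*(x+y)*x^(i+1) ≤ 2*(x+y)*x^N := by nlinarith
  have h3 : 2*(x+y)*x^N < x*c := by
    have h2l : (0:ℝ) < 2*(x+y) := by positivity
    have h' := (lt_div_iff₀ h2l).mp hN
    nlinarith [h']
  have h4 : (1:ℝ) ≤ y^(i+2) := one_le_pow₀ hy1.le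
  nlinarith [mul_nonneg (mul_pos hx0 hc).le (sub_nonneg.2 h4)]

lemma smallness_sub (x y c : ℝ) (hx0 : 0 < x) (hx1 : x < 1) (hy1 : 1 < y)
    (hxy : x*y = 1) (hc : 0 < c) :
    ∃ M : ℕ, ∀ i, M ≤ i → 2*(x+y)*x^i ≤ x*c*(y^(i+1)-1) := by
  have hl0 : 0 < x+y := by linarith
  have hy0 : 0 < y := by linarith
  obtain ⟨N1, hN1⟩ := exists_pow_lt_of_lt_one (show 0 < x*c/(8*(x+y)) by positivity) hx1
  obtain ⟨N2, hN2⟩ := exists_pow_lt_of_lt_one (show 0 < (1:ℝ)/2 by norm_num) hx1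
  refine ⟨N1+N2+1, fun i hi => ?_⟩
  have hxiy : x^(i+1)*y^(i+1) = 1 := by rw [← mul_pow, hxy, one_pow]
  have hxi2 : x^(i+1) ≤ 1/2 :=
    le_trans (pow_le_pow_of_le_one hx0.le hx1.le (by omega)) hN2.le
  have hyp : 0 < y^(i+1) := pow_pos hy0 _
  have hy2 : 2 ≤ y^(i+1) := by nlinarith [pow_pos hx0 (i+1)]
  have hxield : x^i * x^(i+1) ≤ x^N1 := by
    calc x^i*x^(i+1) = x^(i+(i+1)) := (pow_add x i (i+1)).symm
      _ ≤ x^N1 := pow_le_pow_of_le_one hx0.le hx1.le (by omega)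
  have step1 : 2*(x+y)*x^i = (2*(x+y)*(x^i*x^(i+1)))*y^(i+1) := by
    linear_combination (-(2*(x+y)*x^i))*hxiy
  have step2 : (2*(x+y)*(x^i*x^(i+1)))*y^(i+1) ≤ (2*(x+y)*x^N1)*y^(i+1) := by
    apply mul_le_mul_of_nonneg_right _ hyp.le
    nlinarith
  have step3 : 2*(x+y)*x^N1 ≤ x*c/4 := by
    have h8l : (0:ℝ) < 8*(x+y) := by positivity
    have h' := (lt_div_iff₀ h8l).mp hN1
    nlinarith [h']
  have step4 : (x*c/4)*y^(i+1) ≤ x*c*(y^(i+1)-1) := by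
    nlinarith [mul_nonneg (mul_pos hx0 hc).le (show (0:ℝ) ≤ 3/4*y^(i+1) - 1 by linarith)]
  calc 2*(x+y)*x^i = (2*(x+y)*(x^i*x^(i+1)))*y^(i+1) := step1
    _ ≤ (2*(x+y)*x^N1)*y^(i+1) := step2
    _ ≤ (x*c/4)*y^(i+1) := mul_le_mul_of_nonneg_right step3 hyp.le
    _ ≤ x*c*(y^(i+1)-1) := step4

end Smallness

/-- Lemma 2.10: the equation `d_2 = x_1^k` has a unique root `ρ″_k` in `(√(2+√5), ∞)`,
and `ρ(T″_{(i,k,j)}) → ρ″_k` as `min(i,j) → ∞`. -/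
theorem specRad_T2_limit (k : ℕ) (hk : 1 ≤ k) :
    ∃ ρ : ℝ,
      (Real.sqrt (2 + Real.sqrt 5) < ρ ∧ d2f ρ = x1 ρ ^ k) ∧
      (∀ x : ℝ, Real.sqrt (2 + Real.sqrt 5) < x → d2f x = x1 x ^ k → x = ρ) ∧
      (∀ ε : ℝ, 0 < ε → ∃ M : ℕ, ∀ i j : ℕ, M ≤ i → M ≤ j →
        |specRad (treeT2 i k j) - ρ| < ε) := by
  obtain ⟨κ, rfl⟩ : ∃ κ, k = κ+1 := ⟨k-1, by omega⟩
  obtain ⟨ρ, hρ1, hρ3, hρ0, huniq⟩ := exists_rho (κ+1) (by omega)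
  refine ⟨ρ, ⟨hρ1, ?_⟩, ?_, ?_⟩
  · have h' := hρ0; unfold Ffun at h'; linarith
  · intro z hz hFz
    exact huniq z hz (by unfold Ffun; rw [hFz]; ring)
  intro ε hε
  have hl0two := l0_gt_two
  have hρ2 : 2 < ρ := lt_trans hl0two hρ1
  have hlm_lt : max ((l0+ρ)/2) (ρ - ε/2) < ρ := max_lt (by linarith) (by linarith)
  set lm : ℝ := max ((l0+ρ)/2) (ρ - ε/2) with hlmdef
  have hlm_gt : l0 < lm := lt_of_lt_of_le (by linarith) (le_max_left _ _)
  have hlm2 : 2 < lm := lt_trans hl0two hlm_gt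
  have hlm_ge : ρ - ε/2 ≤ lm := le_max_right _ _
  have hlp2 : 2 < ρ + ε/2 := by linarith
  have hxym := x1_mul_x2 hlm2
  have hsm := x1_add_x2 lm
  have hxm0 := x1_pos hlm2
  have hxm1 := x1_lt_one hlm2
  have hym1 := x2_gt_one hlm2
  have hxyp := x1_mul_x2 hlp2
  have hsp := x1_add_x2 (ρ + ε/2)
  have hxp0 := x1_pos hlp2
  have hxp1 := x1_lt_one hlp2
  have hyp1 := x2_gt_one hlp2
  have hFm : Ffun (κ+1) lm < 0 := by
    have h' := Ffun_strictMono (κ+1) (by omega) (Set.mem_Ioi.2 hlm2) (Set.mem_Ioi.2 hρ2) hlm_lt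
    rwa [hρ0] at h'
  have hFp : 0 < Ffun (κ+1) (ρ+ε/2) := by
    have h' := Ffun_strictMono (κ+1) (by omega) (Set.mem_Ioi.2 hρ2) (Set.mem_Ioi.2 hlp2)
      (by linarith)
    rwa [hρ0] at h'
  have hdm : 0 < x1 lm^(κ+1) - x2 lm^3 + (x1 lm + x2 lm) := by
    unfold Ffun d2f at hFm; rw [hsm]; linarith
  have hdp : 0 < x2 (ρ+ε/2)^3 - (x1 (ρ+ε/2) + x2 (ρ+ε/2)) - x1 (ρ+ε/2)^(κ+1) := by
    unfold Ffun d2f at hFp; rw [hsp]; linarith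
  obtain ⟨Msup, hMsup⟩ := smallness_super (x1 (ρ+ε/2)) (x2 (ρ+ε/2))
    (x2 (ρ+ε/2)^3 - (x1 (ρ+ε/2)+x2 (ρ+ε/2)) - x1 (ρ+ε/2)^(κ+1)) hxp0 hxp1 hyp1 hxyp hdp
  obtain ⟨Msub, hMsub⟩ := smallness_sub (x1 lm) (x2 lm)
    (x1 lm^(κ+1) - x2 lm^3 + (x1 lm + x2 lm)) hxm0 hxm1 hym1 hxym hdm
  refine ⟨max 2 (max Msup Msub), fun i j hi hj => ?_⟩
  obtain ⟨gp, hgp_pos, hgp⟩ := supersol i κ j (by omega) (by omega)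
    (x1 (ρ+ε/2)) (x2 (ρ+ε/2)) hxyp hxp0 hxp1 hyp1 hdp
    (hMsup i (by omega)) (hMsup j (by omega))
  obtain ⟨gm, hgm_nn, hgm_ne, hgm⟩ := subsol i κ j (by omega) (by omega)
    (x1 lm) (x2 lm) hxym hxm0 hxm1 hym1 hdm
    (hMsub i (by omega)) (hMsub j (by omega))
  haveI : Nonempty (Fin (i+(κ+1)+j+6) ⊕ Fin 4) := ⟨Sum.inr 0⟩
  have hub : ∀ t ∈ {t : ℝ | ∃ f : (Fin (i+(κ+1)+j+6) ⊕ Fin 4) → ℝ, f ≠ 0 ∧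
      (adjM (treeT2 i (κ+1) j)).mulVec f = t • f}, t ≤ ρ + ε/2 := by
    intro t ht
    have h' := eig_le_of_supersol (treeT2 i (κ+1) j) hgp_pos hgp ht
    rwa [hsp] at h'
  have hbdd : BddAbove {t : ℝ | ∃ f : (Fin (i+(κ+1)+j+6) ⊕ Fin 4) → ℝ, f ≠ 0 ∧
      (adjM (treeT2 i (κ+1) j)).mulVec f = t • f} := ⟨ρ+ε/2, fun t ht => hub t ht⟩
  obtain ⟨t0, ht0S, ht0⟩ := exists_eig_ge_of_subsol (treeT2 i (κ+1) j) hgm_nn hgm_ne hgm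
  rw [hsm] at ht0
  have h1 : lm ≤ sSup {t : ℝ | ∃ f : (Fin (i+(κ+1)+j+6) ⊕ Fin 4) → ℝ, f ≠ 0 ∧
      (adjM (treeT2 i (κ+1) j)).mulVec f = t • f} := le_trans ht0 (le_csSup hbdd ht0S)
  have h2 : sSup {t : ℝ | ∃ f : (Fin (i+(κ+1)+j+6) ⊕ Fin 4) → ℝ, f ≠ 0 ∧
      (adjM (treeT2 i (κ+1) j)).mulVec f = t • f} ≤ ρ + ε/2 := csSup_le ⟨t0, ht0S⟩ hub
  have hspec : specRad (treeT2 i (κ+1) j) = sSup {t : ℝ | ∃ f : (Fin (i+(κ+1)+j+6) ⊕ Fin 4) → ℝ,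
      f ≠ 0 ∧ (adjM (treeT2 i (κ+1) j)).mulVec f = t • f} := rfl
  rw [hspec, abs_lt]
  constructor
  · linarith
  · linarith
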